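/- Let F be a tract, and let φ : T_n ∪ A_n → F be a restricted Grassmann–Plücker function of type D with parameter σ as in (rGP3). Let S be a hyper-transversal and S' = S \ {i,i*} for the skew pair {i,i*} ⊆ S. Define X_S(k) = (-1)^{|S<k|} φ(S\{k}) for k ∈ S (and 0 otherwise), and Y_{S'}(k) = (-1)^{|S'<k*|} φ(S'∪{k*}) for k ∉ (S')* (and 0 otherwise), using the order 1 < 1* < 2 < 2* < ... < n < n*. Then Y_{S'} = X_S or Y_{S'} = -X_S. -/

import Mathlib

/-- A tract: a commutative multiplicative monoid `F = F^× ⊔ {0}` in which every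
nonzero element is invertible (a `CommGroupWithZero`), together with a null set
`N` of formal sums of elements of `F` (encoded as multisets, modulo the rule
that adding or removing a summand `0` does not change nullity), satisfying:
(T2) the only null singleton sum is `0`; (T3) there is a unique element `-1 ∈ F^×`
with `1 + (-1)` null; (T4) the null set is closed under multiplication by
elements of `F^×`. -/
structure Tract (F : Type*) [CommGroupWithZero F] where
  /-- The null set of formal sums. -/
  N : Set (Multiset F)
  /-- `0 + Σ aᵢ` is null iff `Σ aᵢ` is null. -/
  zero_cons_mem_iff : ∀ m : Multiset F, (0 ::ₘ m) ∈ N ↔ m ∈ N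
  /-- (T2) `F ∩ N = {0}`: a one-term formal sum is null iff its term is `0`. -/
  singleton_mem_iff : ∀ a : F, ({a} : Multiset F) ∈ N ↔ a = 0
  /-- (T3) There is a unique `ε ∈ F^×` with `1 + ε` null. -/
  existsUnique_neg_one : ∃! ε : F, ε ≠ 0 ∧ ({1, ε} : Multiset F) ∈ N
  /-- (T4) `c · α ∈ N` for `α ∈ N` and `c ∈ F^×`. -/
  smul_mem : ∀ c : F, c ≠ 0 → ∀ m ∈ N, Multiset.map (fun x => c * x) m ∈ N

/-- The ground set `[n] ∪ [n]*`: the element `i ∈ [n]` is `(i, false)` and its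
starred copy `i*` is `(i, true)`. -/
abbrev GroundSet (n : ℕ) := Fin n × Bool

/-- The involution `x ↦ x*`. -/
def st {n : ℕ} (x : GroundSet n) : GroundSet n := (x.1, !x.2)

/-- The skew pair `{x, x*}`. -/
def skw {n : ℕ} (x : GroundSet n) : Finset (GroundSet n) := {x, st x}

/-- The skew pair `{i, i*}` of an index `i ∈ [n]`. -/
def pr {n : ℕ} (i : Fin n) : Finset (GroundSet n) := {(i, false), (i, true)}

/-- A transversal: a subset of `[n] ∪ [n]*` containing exactly one of `i`, `i*`
for each `i ∈ [n]`. -/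
def IsTransversal {n : ℕ} (T : Finset (GroundSet n)) : Prop :=
  ∀ i : Fin n, ((i, false) ∈ T ↔ (i, true) ∉ T)

/-- An almost-transversal: an `n`-element subset of `[n] ∪ [n]*` containing
exactly one full skew pair `{i, i*}`. -/
def IsAlmostTransversal {n : ℕ} (A : Finset (GroundSet n)) : Prop :=
  A.card = n ∧ ∃! i : Fin n, (i, false) ∈ A ∧ (i, true) ∈ A

/-- A hyper-transversal: a transversal with one extra element added. -/
def IsHyperTransversal {n : ℕ} (S : Finset (GroundSet n)) : Prop :=
  ∃ (T : Finset (GroundSet n)) (x : GroundSet n),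
    IsTransversal T ∧ x ∉ T ∧ S = insert x T

/-- A hypo-transversal: a transversal with one element removed. -/
def IsHypoTransversal {n : ℕ} (S : Finset (GroundSet n)) : Prop :=
  ∃ (T : Finset (GroundSet n)) (x : GroundSet n),
    IsTransversal T ∧ x ∈ T ∧ S = T.erase x


/-- The position of an element in the order `1 < 1* < 2 < 2* < ⋯ < n < n*`. -/
def idx {n : ℕ} (p : GroundSet n) : ℕ := 2 * p.1.val + (if p.2 then 1 else 0)

/-- The vector `X_S` associated with a hyper-transversal `S`:
`X_S(k) = (-1)^{|S<k|} φ(S \ {k})` for `k ∈ S` and `0` otherwise. -/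
def Xvec {n : ℕ} {F : Type*} [CommGroupWithZero F] (φ : Finset (GroundSet n) → F)
    (ε : F) (S : Finset (GroundSet n)) : GroundSet n → F := fun k =>
  if k ∈ S then ε ^ ((S.filter (fun a => idx a < idx k)).card) * φ (S.erase k) else 0

/-- The vector `Y_{S'}` associated with a hypo-transversal `S'`:
`Y_{S'}(k) = (-1)^{|S'<k*|} φ(S' ∪ {k*})` for `k ∉ (S')*` and `0` otherwise. -/
def Yvec {n : ℕ} {F : Type*} [CommGroupWithZero F] (φ : Finset (GroundSet n) → F)
    (ε : F) (S' : Finset (GroundSet n)) : GroundSet n → F := fun k =>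
  if st k ∈ S' then 0
  else ε ^ ((S'.filter (fun a => idx a < idx (st k))).card) * φ (insert (st k) S')

private lemma idx_injective {n : ℕ} : Function.Injective (idx (n := n)) := by
  rintro ⟨a, u⟩ ⟨b, v⟩ h
  simp only [idx] at h
  cases u <;> cases v <;> simp only [Bool.false_eq_true, eq_self_iff_true, if_false, if_true] at h <;>
    first
      | exact absurd h (by omega)
      | (have hab : a = b := Fin.ext (by omega); rw [hab])

private lemma epow_congr {F : Type*} [CommGroupWithZero F] {ε : F} (h : ε * ε = 1)
    {a b : ℕ} (hab : a % 2 = b % 2) : ε ^ a = ε ^ b := by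
  have h2 : ε ^ 2 = 1 := by rw [pow_two, h]
  have key : ∀ m : ℕ, ε ^ m = ε ^ (m % 2) := by
    intro m
    conv_lhs => rw [← Nat.div_add_mod m 2]
    rw [pow_add, pow_mul, h2, one_pow, one_mul]
  rw [key a, key b, hab]

private lemma cnt_succ {n : ℕ} (A : Finset (GroundSet n)) (p : GroundSet n) :
    (A.filter (fun a => idx a < idx p + 1)).card
      = (A.filter (fun a => idx a < idx p)).card + (if p ∈ A then 1 else 0) := by
  classical
  have hset : A.filter (fun a => idx a < idx p + 1)
      = (A.filter fun a => idx a < idx p) ∪ (A.filter fun a => a = p) := by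
    ext a
    simp only [Finset.mem_filter, Finset.mem_union, Nat.lt_succ_iff_lt_or_eq]
    constructor
    · rintro ⟨ha, h | h⟩
      exacts [Or.inl ⟨ha, h⟩, Or.inr ⟨ha, idx_injective h⟩]
    · rintro (⟨ha, h⟩ | ⟨ha, rfl⟩)
      exacts [⟨ha, Or.inl h⟩, ⟨ha, Or.inr rfl⟩]
  rw [hset, Finset.card_union_of_disjoint, Finset.filter_eq']
  · split_ifs <;> simp
  · rw [Finset.disjoint_left]
    rintro a ha hb
    rw [Finset.mem_filter] at ha hb
    exact absurd (hb.2 ▸ ha.2) (lt_irrefl _)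

private lemma stars_insert {n : ℕ} (A : Finset (GroundSet n)) (p : GroundSet n) (hp : p ∉ A) :
    ((insert p A).filter (fun q => q.2 = true)).card
      = (A.filter (fun q => q.2 = true)).card + (if p.2 then 1 else 0) := by
  rw [Finset.filter_insert]
  split_ifs with h
  · rw [Finset.card_insert_of_notMem (by simp [Finset.mem_filter, hp])]
  · simp at h
    simp [h]

private lemma mem_pr_iff {n : ℕ} (i : Fin n) (a : GroundSet n) : a ∈ pr i ↔ a.1 = i := by
  obtain ⟨a1, a2⟩ := a
  cases a2 <;> simp [pr, Prod.ext_iff]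

private lemma fst_eq_cases {n : ℕ} (a b : GroundSet n) (h : a.1 = b.1) :
    a = b ∨ a = st b := by
  obtain ⟨a1, a2⟩ := a; obtain ⟨b1, b2⟩ := b
  simp only at h
  subst h
  cases a2 <;> cases b2 <;> simp [st]

private lemma st_ne {n : ℕ} (k : GroundSet n) : st k ≠ k := by
  obtain ⟨k1, k2⟩ := k
  simp [st, Prod.ext_iff]

private lemma cnt_pr {n : ℕ} (i : Fin n) (m : ℕ) :
    ((pr i).filter (fun a => idx a < m)).card
      = (if 2 * i.val < m then 1 else 0) + (if 2 * i.val + 1 < m then 1 else 0) := by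
  have h0 : idx ((i, false) : GroundSet n) = 2 * i.val := by simp [idx]
  have h1 : idx ((i, true) : GroundSet n) = 2 * i.val + 1 := by simp [idx]
  rw [pr, Finset.filter_insert, Finset.filter_singleton, h0, h1]
  split_ifs <;>
    simp_all [Finset.card_insert_of_notMem]

/-- Let `φ` be a restricted Grassmann–Plücker function of type D over a tract `F`
(with parameter `σ` as in (rGP3)), `S` a hyper-transversal containing the skew
pair `{x, x*}`, and `S' = S \ {x, x*}`.  Then `Y_{S'} = X_S` or `Y_{S'} = -X_S`. -/
theorem Yvec_eq_Xvec_or_neg {n : ℕ} {F : Type*} [CommGroupWithZero F] (T : Tract F)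
    (ε : F) (hε₀ : ε ≠ 0) (hε : ({1, ε} : Multiset F) ∈ T.N)
    (σ : ℕ) (hσ : σ ≤ 1)
    (φ : Finset (GroundSet n) → F)
    (hrGP1 : ∃ Z : Finset (GroundSet n),
      (IsTransversal Z ∨ IsAlmostTransversal Z) ∧ φ Z ≠ 0)
    (hrGP2 : ∀ S S' : Finset (GroundSet n),
      IsHyperTransversal S → IsHypoTransversal S' →
      ((S \ S').val.map (fun k =>
          ε ^ (((symmDiff S S').filter (fun a => idx a < idx k)).card)
            * (φ (S.erase k) * φ (insert k S')))) ∈ T.N)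
    (hrGP3 : ∀ B : Finset (GroundSet n), IsTransversal B →
      (B.filter (fun p => p.2 = true)).card % 2 ≠ σ % 2 → φ B = 0)
    (hrGP4 : ∀ B : Finset (GroundSet n), IsTransversal B →
      (B.filter (fun p => p.2 = true)).card % 2 = σ →
      ∀ i j : Fin n, i ≠ j →
        φ ((B \ pr i) ∪ pr j)
          = ε ^ ((if (i, false) ∈ B then 1 else 0) + (if (j, false) ∈ B then 1 else 0))
              * φ ((B ∪ pr i) \ pr j))
    (S : Finset (GroundSet n)) (hS : IsHyperTransversal S)
    (x : GroundSet n) (hx : skw x ⊆ S)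
    (S' : Finset (GroundSet n)) (hS' : S' = S \ skw x) :
    Yvec φ ε S' = Xvec φ ε S ∨ Yvec φ ε S' = fun k => ε * Xvec φ ε S k := by
  classical
  obtain ⟨x1, x2⟩ := x
  have hee : ε * ε = 1 := by
    obtain ⟨e, -, hu⟩ := T.existsUnique_neg_one
    have h1 : ε = e := hu ε ⟨hε₀, hε⟩
    have h2 : ε⁻¹ = e := by
      refine hu ε⁻¹ ⟨inv_ne_zero hε₀, ?_⟩
      have hmap := T.smul_mem ε⁻¹ (inv_ne_zero hε₀) _ hε
      have hm : Multiset.map (fun y => ε⁻¹ * y) ({1, ε} : Multiset F) = {1, ε⁻¹} := by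
        rw [show ({1, ε} : Multiset F) = 1 ::ₘ {ε} from rfl, Multiset.map_cons,
          Multiset.map_singleton, mul_one, inv_mul_cancel₀ hε₀]
        exact Multiset.cons_swap _ _ _
      rwa [hm] at hmap
    have h3 : ε = ε⁻¹ := h1.trans h2.symm
    nth_rewrite 2 [h3]
    exact mul_inv_cancel₀ hε₀
  obtain ⟨Tv, y, hTv, hyTv, hSe⟩ := hS
  have mem_skw : ∀ a : GroundSet n, a ∈ skw ((x1, x2) : GroundSet n) ↔ a.1 = x1 := by
    rintro ⟨a1, a2⟩
    cases a2 <;> cases x2 <;> simp [skw, st, Prod.ext_iff]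
  have hxf : ((x1, false) : GroundSet n) ∈ S := hx ((mem_skw _).mpr rfl)
  have hxt : ((x1, true) : GroundSet n) ∈ S := hx ((mem_skw _).mpr rfl)
  have hy1 : y.1 = x1 := by
    by_contra hne
    have h1 : ((x1, false) : GroundSet n) ∈ Tv := by
      have h := hxf
      rw [hSe, Finset.mem_insert] at h
      rcases h with h | h
      · exact absurd (congrArg Prod.fst h.symm) hne
      · exact h
    have h2 : ((x1, true) : GroundSet n) ∈ Tv := by
      have h := hxt
      rw [hSe, Finset.mem_insert] at h
      rcases h with h | h
      · exact absurd (congrArg Prod.fst h.symm) hne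
      · exact h
    exact (hTv x1).mp h1 h2
  have htr : ∀ j : Fin n, j ≠ x1 →
      (((j, false) : GroundSet n) ∈ S ↔ ((j, true) : GroundSet n) ∉ S) := by
    intro j hj
    have hne : ∀ c : Bool, ((j, c) : GroundSet n) ≠ y := by
      intro c h
      exact hj ((congrArg Prod.fst h).trans hy1)
    simp only [hSe, Finset.mem_insert, hne, false_or]
    exact hTv j
  have hS'mem : ∀ a : GroundSet n, a ∈ S' ↔ a ∈ S ∧ a.1 ≠ x1 := by
    intro a
    rw [hS', Finset.mem_sdiff, mem_skw]
  have hxmem : ∀ a : GroundSet n, a.1 = x1 → a ∈ S := by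
    rintro ⟨a1, a2⟩ h
    simp only at h
    subst h
    cases a2
    · exact hxf
    · exact hxt
  have hSunion : S' ∪ pr x1 = S := by
    ext a
    rw [Finset.mem_union, hS'mem, mem_pr_iff]
    constructor
    · rintro (⟨h, -⟩ | h)
      · exact h
      · exact hxmem a h
    · intro h
      by_cases ha : a.1 = x1
      · exact Or.inr ha
      · exact Or.inl ⟨h, ha⟩
  have hdisj : Disjoint S' (pr x1) := by
    rw [Finset.disjoint_left]
    intro a ha hb
    exact ((hS'mem a).1 ha).2 ((mem_pr_iff _ _).1 hb)
  have hsplit : ∀ m : ℕ, (S.filter (fun a => idx a < m)).card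
      = (S'.filter (fun a => idx a < m)).card + ((pr x1).filter (fun a => idx a < m)).card := by
    intro m
    rw [← hSunion, Finset.filter_union,
      Finset.card_union_of_disjoint (Finset.disjoint_filter_filter hdisj)]
  suffices key : ∀ (zc : Bool), ((zc = true) ↔ ((S'.filter (fun p => p.2 = true)).card % 2 = σ)) →
      ∀ k : GroundSet n, Yvec φ ε S' k = ε ^ (if zc then 1 else 0) * Xvec φ ε S k by
    by_cases hst : (S'.filter (fun p => p.2 = true)).card % 2 = σ
    · right
      funext k
      rw [key true (by simpa using hst) k]
      norm_num
    · left
      funext k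
      rw [key false (by simpa using hst) k]
      norm_num
  intro zc hzc k
  obtain ⟨k1, k2⟩ := k
  set s : ℕ := (S'.filter (fun p => p.2 = true)).card with hs
  set tn : ℕ := (if zc then 1 else 0) with htn
  have htn0 : tn ≤ 1 := by
    rw [htn]; split <;> omega
  have htn1 : (tn = 1) ↔ s % 2 = σ := by
    rw [← hzc, htn]; cases zc <;> simp
  by_cases hki : k1 = x1
  · subst hki
    have hkS : ((k1, k2) : GroundSet n) ∈ S := hxmem _ rfl
    have hstS' : ∀ c : Bool, ((k1, c) : GroundSet n) ∉ S' := fun c h => ((hS'mem _).1 h).2 rfl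
    have hstmem : st ((k1, k2) : GroundSet n) ∉ S' := hstS' _
    have herase : insert (st ((k1, k2) : GroundSet n)) S' = S.erase (k1, k2) := by
      ext a
      rw [Finset.mem_insert, Finset.mem_erase, hS'mem]
      by_cases ha : a.1 = k1
      · rcases fst_eq_cases a (k1, k2) ha with rfl | rfl
        · constructor
          · rintro (h | ⟨-, h⟩)
            · exact absurd h.symm (st_ne _)
            · exact absurd rfl h
          · rintro ⟨h, -⟩
            exact absurd rfl h
        · constructor
          · intro _
            exact ⟨st_ne _, hxmem _ rfl⟩
          · intro _
            exact Or.inl rfl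
      · have h1 : a ≠ st (k1, k2) := fun h => ha (by rw [h]; rfl)
        have h2 : a ≠ (k1, k2) := fun h => ha (by rw [h])
        simp [h1, h2, ha]
    have htrSk : IsTransversal (S.erase ((k1, k2) : GroundSet n)) := by
      intro j
      by_cases hj : j = k1
      · subst hj
        cases k2 <;> simp [Finset.mem_erase, hxf, hxt, Prod.ext_iff]
      · have h := htr j hj
        have hne1 : ((j, false) : GroundSet n) ≠ (k1, k2) := fun h' => hj (congrArg Prod.fst h')
        have hne2 : ((j, true) : GroundSet n) ≠ (k1, k2) := fun h' => hj (congrArg Prod.fst h')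
        simp [Finset.mem_erase, hne1, hne2]
        exact h
    simp only [Yvec, Xvec]
    rw [if_neg hstmem, if_pos hkS, herase]
    by_cases hp : ((S.erase ((k1, k2) : GroundSet n)).filter (fun p => p.2 = true)).card % 2 = σ % 2
    swap
    · rw [hrGP3 _ htrSk hp, mul_zero, mul_zero, mul_zero]
    · rw [← mul_assoc, ← pow_add]
      congr 1
      apply epow_congr hee
      cases k2
      · have eA : idx ((k1, false) : GroundSet n) = 2 * k1.val := by simp [idx]
        have eC : idx (st ((k1, false) : GroundSet n)) = 2 * k1.val + 1 := by simp [st, idx]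
        have hstars : ((S.erase ((k1, false) : GroundSet n)).filter (fun p => p.2 = true)).card
            = s + 1 := by
          rw [← herase, stars_insert S' _ hstmem]
          simp [st, hs]
        rw [hstars] at hp
        have e2 := cnt_succ S' ((k1, false) : GroundSet n)
        rw [if_neg (hstS' false)] at e2
        simp only [eA] at e2
        have e3 := hsplit (2 * k1.val)
        have e4 := cnt_pr k1 (2 * k1.val)
        rw [if_neg (by omega), if_neg (by omega)] at e4
        simp only [eA, eC]
        omega
      · have eB : idx ((k1, true) : GroundSet n) = 2 * k1.val + 1 := by simp [idx]
        have eA : idx ((k1, false) : GroundSet n) = 2 * k1.val := by simp [idx]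
        have eD : idx (st ((k1, true) : GroundSet n)) = 2 * k1.val := by simp [st, idx]
        have hstars : ((S.erase ((k1, true) : GroundSet n)).filter (fun p => p.2 = true)).card
            = s := by
          rw [← herase, stars_insert S' _ hstmem]
          simp [st, hs]
        rw [hstars] at hp
        have e2 := cnt_succ S' ((k1, false) : GroundSet n)
        rw [if_neg (hstS' false)] at e2
        simp only [eA] at e2
        have e3 := hsplit (2 * k1.val + 1)
        have e4 := cnt_pr k1 (2 * k1.val + 1)
        rw [if_pos (by omega), if_neg (by omega)] at e4
        simp only [eB, eD]
        omega
  · by_cases hkS : ((k1, k2) : GroundSet n) ∈ S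
    swap
    · have hstS : ((k1, !k2) : GroundSet n) ∈ S := by
        cases k2
        · by_contra hc
          exact hkS ((htr k1 hki).mpr (by simpa using hc))
        · by_contra hc
          exact (by simpa using hc : ((k1, false) : GroundSet n) ∉ S)
            ((htr k1 hki).mpr hkS)
      have hstmem : st ((k1, k2) : GroundSet n) ∈ S' := (hS'mem _).2 ⟨hstS, hki⟩
      simp only [Yvec, Xvec]
      rw [if_pos hstmem, if_neg hkS, mul_zero]
    · have hkS' : ((k1, k2) : GroundSet n) ∈ S' := (hS'mem _).2 ⟨hkS, hki⟩
      have hstnS : ((k1, !k2) : GroundSet n) ∉ S := by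
        cases k2
        · simpa using (htr k1 hki).mp hkS
        · exact fun hc => (htr k1 hki).mp (by simpa using hc) hkS
      have hstnS' : st ((k1, k2) : GroundSet n) ∉ S' := fun h => hstnS ((hS'mem _).1 h).1
      set z : GroundSet n := (x1, zc) with hz
      set S2 : Finset (GroundSet n) :=
        insert ((k1, !k2) : GroundSet n) (S'.erase (k1, k2)) with hS2
      set B : Finset (GroundSet n) := insert z S2 with hB
      have hmemS' : ∀ a : GroundSet n, a ∈ S' → a.1 ≠ x1 := fun a ha => ((hS'mem a).1 ha).2
      have hmemB : ∀ a : GroundSet n,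
          a ∈ B ↔ (a = z ∨ a = (k1, !k2) ∨ (a ≠ (k1, k2) ∧ a ∈ S')) := by
        intro a
        rw [hB, hS2]
        simp [Finset.mem_insert, Finset.mem_erase]
      have hmx : ∀ c : Bool, (((x1, c) : GroundSet n) ∈ B ↔ c = zc) := by
        intro c
        rw [hmemB]
        constructor
        · rintro (h | h | ⟨-, h⟩)
          · exact (Prod.ext_iff.1 h).2
          · exact absurd (congrArg Prod.fst h).symm hki
          · exact absurd rfl (hmemS' _ h)
        · rintro rfl
          exact Or.inl rfl
      have hmk : ∀ c : Bool, (((k1, c) : GroundSet n) ∈ B ↔ c = !k2) := by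
        intro c
        rw [hmemB]
        constructor
        · rintro (h | h | ⟨hne, h⟩)
          · exact absurd (congrArg Prod.fst h) hki
          · exact (Prod.ext_iff.1 h).2
          · have hc : c ≠ k2 := fun hc => hne (by rw [hc])
            have hc2 : c = !k2 := by
              cases c <;> cases k2 <;> simp_all
            rw [hc2] at h
            exact absurd ((hS'mem _).1 h).1 hstnS
        · rintro rfl
          exact Or.inr (Or.inl rfl)
      have hmj : ∀ (j : Fin n), j ≠ x1 → j ≠ k1 → ∀ c : Bool,
          (((j, c) : GroundSet n) ∈ B ↔ ((j, c) : GroundSet n) ∈ S) := by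
        intro j hjx hjk c
        rw [hmemB]
        constructor
        · rintro (h | h | ⟨-, h⟩)
          · exact absurd (congrArg Prod.fst h) hjx
          · exact absurd (congrArg Prod.fst h) hjk
          · exact ((hS'mem _).1 h).1
        · intro h
          exact Or.inr (Or.inr ⟨fun h' => hjk (congrArg Prod.fst h'), (hS'mem _).2 ⟨h, hjx⟩⟩)
      have hBtr : IsTransversal B := by
        intro j
        by_cases hjx : j = x1
        · subst hjx
          rw [hmx false, hmx true]
          cases zc <;> simp
        · by_cases hjk : j = k1
          · subst hjk
            rw [hmk false, hmk true]
            cases k2 <;> simp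
          · rw [hmj j hjx hjk false, hmj j hjx hjk true]
            exact htr j hjx
      have hzS2 : z ∉ S2 := by
        rw [hS2, Finset.mem_insert]
        rintro (h | h)
        · exact hki (congrArg Prod.fst h).symm
        · exact hmemS' _ (Finset.mem_of_mem_erase h) rfl
      have hknS2 : ((k1, !k2) : GroundSet n) ∉ S'.erase (k1, k2) := fun h =>
        hstnS ((hS'mem _).1 (Finset.mem_of_mem_erase h)).1
      have hstars3 : s = ((S'.erase ((k1, k2) : GroundSet n)).filter (fun q => q.2 = true)).card
          + (if k2 then 1 else 0) := by
        conv_lhs => rw [hs, ← Finset.insert_erase hkS']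
        exact stars_insert _ _ (Finset.notMem_erase _ _)
      have hBstars : ((B.filter (fun p => p.2 = true)).card) % 2 = σ := by
        rw [hB, stars_insert S2 z hzS2, hS2, stars_insert _ _ hknS2]
        have h5 := htn1
        have h6 := hstars3
        rw [htn] at h5
        cases zc <;> cases k2 <;> simp [hz] at h5 h6 ⊢ <;> omega
      have h4 := hrGP4 B hBtr hBstars x1 k1 (fun h => hki h.symm)
      have hBl : (B \ pr x1) ∪ pr k1 = insert ((k1, !k2) : GroundSet n) S' := by
        ext a
        rw [Finset.mem_union, Finset.mem_sdiff, hmemB, mem_pr_iff, mem_pr_iff,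
          Finset.mem_insert]
        constructor
        · rintro (⟨h | h | ⟨-, h⟩, hax⟩ | h)
          · exact absurd (congrArg Prod.fst h) hax
          · exact Or.inl h
          · exact Or.inr h
          · rcases fst_eq_cases a (k1, k2) h with rfl | rfl
            · exact Or.inr hkS'
            · exact Or.inl rfl
        · rintro (rfl | h)
          · exact Or.inr rfl
          · by_cases hak : a.1 = k1
            · exact Or.inr hak
            · exact Or.inl ⟨Or.inr (Or.inr ⟨fun h' => hak (congrArg Prod.fst h'), h⟩),
                hmemS' a h⟩
      have hBr : (B ∪ pr x1) \ pr k1 = S.erase ((k1, k2) : GroundSet n) := by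
        ext a
        rw [Finset.mem_sdiff, Finset.mem_union, hmemB, mem_pr_iff, mem_pr_iff,
          Finset.mem_erase]
        constructor
        · rintro ⟨h | hax, hak⟩
          · rcases h with h | h | ⟨hne, h⟩
            · have hax' : a.1 = x1 := congrArg Prod.fst h
              exact ⟨fun h' => hki ((congrArg Prod.fst h').symm.trans hax'),
                hxmem a hax'⟩
            · exact absurd (congrArg Prod.fst h) hak
            · exact ⟨hne, ((hS'mem a).1 h).1⟩
          · exact ⟨fun h' => hki ((congrArg Prod.fst h').symm.trans hax), hxmem a hax⟩
        · rintro ⟨hne, haS⟩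
          by_cases hak : a.1 = k1
          · rcases fst_eq_cases a (k1, k2) hak with rfl | rfl
            · exact absurd rfl hne
            · exact absurd haS hstnS
          · refine ⟨?_, hak⟩
            by_cases hax : a.1 = x1
            · exact Or.inr hax
            · exact Or.inl (Or.inr (Or.inr ⟨fun h' => hak (congrArg Prod.fst h'),
                (hS'mem a).2 ⟨haS, hax⟩⟩))
      rw [hBl, hBr] at h4
      have hzceq : (((x1, false) : GroundSet n) ∈ B) ↔ zc = false := by
        rw [hmx false]
        exact eq_comm
      have hif1 : (if ((x1, false) : GroundSet n) ∈ B then 1 else 0) + tn = 1 := by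
        rw [htn]
        by_cases h : zc = true
        · rw [if_pos h, if_neg (by simp [hzceq, h])]
        · rw [if_neg h, if_pos (hzceq.2 (by simpa using h))]
      simp only [Yvec, Xvec]
      rw [if_neg hstnS', if_pos hkS]
      have hstk : st ((k1, k2) : GroundSet n) = ((k1, !k2) : GroundSet n) := rfl
      simp only [hstk]
      rw [h4, ← mul_assoc, ← pow_add, ← mul_assoc, ← pow_add]
      congr 1
      apply epow_congr hee
      have hvne : x1.val ≠ k1.val := fun h => hki (Fin.ext h.symm)
      cases k2
      · have eA : idx ((k1, false) : GroundSet n) = 2 * k1.val := by simp [idx]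
        have eB : idx ((k1, true) : GroundSet n) = 2 * k1.val + 1 := by simp [idx]
        have hif2 : (if ((k1, false) : GroundSet n) ∈ B then 1 else 0) = 0 := by
          rw [if_neg (fun hc => by simpa using (hmk false).1 hc)]
        have e2 := cnt_succ S' ((k1, false) : GroundSet n)
        rw [if_pos hkS'] at e2
        simp only [eA] at e2
        have e3 := hsplit (2 * k1.val)
        have e4 : ((pr x1).filter (fun a => idx a < 2 * k1.val)).card % 2 = 0 := by
          rw [cnt_pr]
          split_ifs <;> omega
        simp only [Bool.not_false, eA, eB]
        omega
      · have eA : idx ((k1, false) : GroundSet n) = 2 * k1.val := by simp [idx]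
        have eB : idx ((k1, true) : GroundSet n) = 2 * k1.val + 1 := by simp [idx]
        have hif2 : (if ((k1, false) : GroundSet n) ∈ B then 1 else 0) = 1 := by
          rw [if_pos ((hmk false).2 (by simp))]
        have e2 := cnt_succ S' ((k1, false) : GroundSet n)
        rw [if_neg (fun hc : ((k1, false) : GroundSet n) ∈ S' =>
          hstnS ((hS'mem _).1 hc).1)] at e2
        simp only [eA] at e2
        have e3 := hsplit (2 * k1.val + 1)
        have e4 : ((pr x1).filter (fun a => idx a < 2 * k1.val + 1)).card % 2 = 0 := by
          rw [cnt_pr]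
          split_ifs <;> omega
        simp only [Bool.not_true, eA, eB]
        omega
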